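/- Let X be a topological space and let σ₁, σ₂ : X → X be commuting local homeomorphisms. For n ∈ ℕ² let R_n = {(x,y) ∈ X × X : σⁿ(x) = σⁿ(y)}, equipped with the subspace topology from X × X. Then the diagonal Δ = {(x,x) : x ∈ X} is an open subset of R_n. -/

import Mathlib

/-- If `σ₁, σ₂ : X → X` are commuting local homeomorphisms and
`R_n = {(x,y) | σⁿ x = σⁿ y}` carries the subspace topology from `X × X`,
then the diagonal is open in `R_n`. -/
theorem diagonal_open_in_Rn {X : Type*} [TopologicalSpace X] (σ₁ σ₂ : X → X)
    (h₁ : IsLocalHomeomorph σ₁) (h₂ : IsLocalHomeomorph σ₂)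
    (hcomm : σ₁ ∘ σ₂ = σ₂ ∘ σ₁) (n : ℕ × ℕ) :
    IsOpen {p : {q : X × X // σ₁^[n.1] (σ₂^[n.2] q.1) = σ₁^[n.1] (σ₂^[n.2] q.2)} |
      p.val.1 = p.val.2} := by
  have hit : ∀ (σ : X → X), IsLocalHomeomorph σ → ∀ k : ℕ, IsLocalHomeomorph σ^[k] := by
    intro σ hσ k
    induction k with
    | zero => simpa using IsLocalHomeomorph.mk (f := @id X) (fun x => ⟨OpenPartialHomeomorph.refl X, trivial, fun _ _ => rfl⟩)
    | succ k ih => rw [Function.iterate_succ']; exact hσ.comp ih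
  have hσ : IsLocalHomeomorph (σ₁^[n.1] ∘ σ₂^[n.2]) :=
    (hit σ₁ h₁ n.1).comp (hit σ₂ h₂ n.2)
  rw [isOpen_iff_forall_mem_open]
  rintro ⟨⟨x, y⟩, hxy⟩ (h : x = y)
  subst h
  obtain ⟨e, hx, he⟩ := hσ x
  refine ⟨Subtype.val ⁻¹' (e.source ×ˢ e.source), ?_, ?_, ?_⟩
  · rintro ⟨⟨a, b⟩, hab⟩ ⟨ha, hb⟩
    show a = b
    have h2 : (σ₁^[n.1] ∘ σ₂^[n.2]) a = (σ₁^[n.1] ∘ σ₂^[n.2]) b := hab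
    rw [he] at h2
    exact e.injOn ha hb h2
  · exact (e.open_source.prod e.open_source).preimage continuous_subtype_val
  · exact ⟨hx, hx⟩
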